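/- Fix q ∈ (0,1) and consider the equation (1−q)·(e^{−t} − t²/2) = q·(t + e^{−t})² in the real variable t ≥ 0. This equation has a nonnegative solution if and only if q ≤ 1/2; moreover, when 0 < q < 1/2 the nonnegative solution is unique and strictly positive, and when q = 1/2 the unique nonnegative solution is t = 0. -/

import Mathlib

open Real Set

noncomputable def Faux (q t : ℝ) : ℝ :=
  (1 - q) * (Real.exp (-t) - t ^ 2 / 2) - q * (t + Real.exp (-t)) ^ 2

lemma Faux_deriv (q t : ℝ) :
    HasDerivAt (Faux q)
      ((1 - q) * (-Real.exp (-t) - t) -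
        q * (2 * (t + Real.exp (-t)) * (1 - Real.exp (-t)))) t := by
  have he : HasDerivAt (fun t : ℝ => Real.exp (-t)) (-Real.exp (-t)) t := by
    simpa [Function.comp_def] using (Real.hasDerivAt_exp (-t)).comp t (hasDerivAt_neg t)
  have hp : HasDerivAt (fun t : ℝ => t ^ 2 / 2) t t := by
    simpa using (hasDerivAt_pow 2 t).div_const 2
  have h1 : HasDerivAt (fun t : ℝ => Real.exp (-t) - t ^ 2 / 2)
      (-Real.exp (-t) - t) t := he.sub hp
  have hb : HasDerivAt (fun t : ℝ => t + Real.exp (-t)) (1 + -Real.exp (-t)) t :=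
    (hasDerivAt_id t).add he
  have h2 : HasDerivAt (fun t : ℝ => (t + Real.exp (-t)) ^ 2)
      (2 * (t + Real.exp (-t)) * (1 - Real.exp (-t))) t := by
    have := hb.pow 2
    simpa [sub_eq_add_neg, Pi.pow_def] using this
  exact (h1.const_mul (1 - q)).sub (h2.const_mul q)

lemma Faux_anti {q : ℝ} (hq0 : 0 < q) (hq1 : q < 1) : StrictAntiOn (Faux q) (Ici 0) := by
  apply strictAntiOn_of_deriv_neg (convex_Ici 0)
  · exact fun t _ => (Faux_deriv q t).continuousAt.continuousWithinAt
  · intro t ht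
    rw [interior_Ici] at ht
    rw [(Faux_deriv q t).deriv]
    have h1 : Real.exp (-t) < 1 := Real.exp_lt_one_iff.mpr (by linarith [mem_Ioi.mp ht])
    have h2 : 0 < Real.exp (-t) := Real.exp_pos _
    have ht' : 0 < t := mem_Ioi.mp ht
    have hA : (1 - q) * (-Real.exp (-t) - t) < 0 :=
      mul_neg_of_pos_of_neg (by linarith) (by linarith)
    have hB : 0 < q * (2 * (t + Real.exp (-t)) * (1 - Real.exp (-t))) :=
      mul_pos hq0 (mul_pos (by linarith) (by linarith))
    linarith

theorem stmt2 (q : ℝ) (hq0 : 0 < q) (hq1 : q < 1) :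
    ((∃ t : ℝ, 0 ≤ t ∧
        (1 - q) * (Real.exp (-t) - t ^ 2 / 2) = q * (t + Real.exp (-t)) ^ 2) ↔ q ≤ 1 / 2) ∧
    (q < 1 / 2 →
      (∃! t : ℝ, 0 ≤ t ∧
          (1 - q) * (Real.exp (-t) - t ^ 2 / 2) = q * (t + Real.exp (-t)) ^ 2) ∧
      (∀ t : ℝ, 0 ≤ t →
          (1 - q) * (Real.exp (-t) - t ^ 2 / 2) = q * (t + Real.exp (-t)) ^ 2 → 0 < t)) ∧
    (q = 1 / 2 →
      ∀ t : ℝ, 0 ≤ t →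
        ((1 - q) * (Real.exp (-t) - t ^ 2 / 2) = q * (t + Real.exp (-t)) ^ 2 ↔ t = 0)) := by
  have key : ∀ t : ℝ,
      ((1 - q) * (Real.exp (-t) - t ^ 2 / 2) = q * (t + Real.exp (-t)) ^ 2) ↔ Faux q t = 0 := by
    intro t; rw [Faux, sub_eq_zero]
  have hF0 : Faux q 0 = 1 - 2 * q := by
    simp [Faux]; ring
  have anti := Faux_anti hq0 hq1
  have hex : q ≤ 1 / 2 → ∃ t : ℝ, 0 ≤ t ∧ Faux q t = 0 := by
    intro hq
    have h0 : 0 ≤ Faux q 0 := by rw [hF0]; linarith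
    have h2 : Faux q 2 ≤ 0 := by
      have he1 : Real.exp (-(2 : ℝ)) < 1 := Real.exp_lt_one_iff.mpr (by norm_num)
      have he2 : 0 < Real.exp (-(2 : ℝ)) := Real.exp_pos _
      simp only [Faux]
      nlinarith
    have hcont : ContinuousOn (Faux q) (Icc 0 2) :=
      fun t _ => (Faux_deriv q t).continuousAt.continuousWithinAt
    have := intermediate_value_Icc' (by norm_num : (0 : ℝ) ≤ 2) hcont ⟨h2, h0⟩
    obtain ⟨t, ht, hft⟩ := this
    exact ⟨t, ht.1, hft⟩
  have hneg : ∀ t : ℝ, 0 < t → Faux q t < Faux q 0 :=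
    fun t ht => anti (le_refl (0 : ℝ)) (le_of_lt ht) ht
  refine ⟨?_, ?_, ?_⟩
  · constructor
    · rintro ⟨t, ht0, heq⟩
      rw [key] at heq
      by_contra hq
      push_neg at hq
      rcases eq_or_lt_of_le ht0 with h | h
      · rw [← h, hF0] at heq; linarith
      · have := hneg t h
        rw [heq, hF0] at this; linarith
    · intro hq
      obtain ⟨t, ht0, heq⟩ := hex hq
      exact ⟨t, ht0, (key t).mpr heq⟩
  · intro hq
    have hpos : ∀ t : ℝ, 0 ≤ t →
        (1 - q) * (Real.exp (-t) - t ^ 2 / 2) = q * (t + Real.exp (-t)) ^ 2 → 0 < t := by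
      intro t ht0 heq
      rw [key] at heq
      rcases eq_or_lt_of_le ht0 with h | h
      · rw [← h, hF0] at heq; linarith
      · exact h
    refine ⟨?_, hpos⟩
    obtain ⟨t, ht0, heq⟩ := hex (le_of_lt hq)
    refine ⟨t, ⟨ht0, (key t).mpr heq⟩, ?_⟩
    rintro y ⟨hy0, hyeq⟩
    rw [key] at hyeq
    exact anti.injOn hy0 ht0 (by rw [hyeq, heq])
  · intro hq t ht0
    rw [key]
    constructor
    · intro heq
      by_contra hne
      have ht : 0 < t := lt_of_le_of_ne ht0 (Ne.symm hne)
      have := hneg t ht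
      rw [heq, hF0, hq] at this
      linarith
    · intro h; rw [h, hF0, hq]; ring
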